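/- Let θ ∈ (0,1]^n with θ_i < 1 exactly for indices i in a set u ⊆ {1,...,n}, and suppose θ_i > 0 for all i ≤ max(u). Define F(z_i) = 1 − ∏_{j=1}^{i} θ_j. Then F(z_i) < 1 for all i < max(u), F is strictly increasing exactly at the indices in u (i.e., F(z_i) > F(z_{i-1}) if and only if i ∈ u and F(z_{i-1}) < 1), and F(z_i) = F(z_{i-1}) for i ∉ u with i < max(u). -/
import Mathlib


/-- Characterization of step CDFs via the θ-parametrization: with θ_i ∈ (0,1],
θ_i < 1 exactly on u, and θ_i > 0 for i ≤ max u, the values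
F_i = 1 − ∏_{j≤i} θ_j satisfy F_i < 1 for i < max u, and F increases exactly at
the indices in u. -/
theorem theta_jump_characterization (n : ℕ) (θ : ℕ → ℝ) (u : Finset ℕ)
    (hu : u.Nonempty) (husub : u ⊆ Finset.Icc 1 n)
    (hθ01 : ∀ i, 1 ≤ i → i ≤ n → 0 ≤ θ i ∧ θ i ≤ 1)
    (hθu : ∀ i, 1 ≤ i → i ≤ n → (θ i < 1 ↔ i ∈ u))
    (hθpos : ∀ i, 1 ≤ i → i ≤ u.max' hu → 0 < θ i)
    (F : ℕ → ℝ) (hF : ∀ i, F i = 1 - ∏ j ∈ Finset.Icc 1 i, θ j) :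
    (∀ i < u.max' hu, F i < 1) ∧
    (∀ i, 1 ≤ i → i ≤ n → (F (i - 1) < F i ↔ i ∈ u ∧ F (i - 1) < 1)) ∧
    (∀ i, 1 ≤ i → i ≤ n → i ∉ u → i < u.max' hu → F i = F (i - 1)) := by
  have hmaxmem := u.max'_mem hu
  have hmaxIcc := husub hmaxmem
  rw [Finset.mem_Icc] at hmaxIcc
  set P : ℕ → ℝ := fun i => ∏ j ∈ Finset.Icc 1 i, θ j with hP
  have hPnn : ∀ i, i ≤ n → 0 ≤ P i := by
    intro i hi
    apply Finset.prod_nonneg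
    intro j hj
    rw [Finset.mem_Icc] at hj
    exact (hθ01 j hj.1 (hj.2.trans hi)).1
  have hsplit : ∀ i, 1 ≤ i →
      (∏ j ∈ Finset.Icc 1 i, θ j) = (∏ j ∈ Finset.Icc 1 (i - 1), θ j) * θ i := by
    intro i hi
    have h : i = (i - 1) + 1 := (Nat.succ_pred_eq_of_pos hi).symm
    conv_lhs => rw [h, Finset.prod_Icc_succ_top (by omega)]
    rw [← h]
  have hPpos : ∀ i, i < u.max' hu → 0 < P i := by
    intro i hi
    apply Finset.prod_pos
    intro j hj
    rw [Finset.mem_Icc] at hj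
    exact hθpos j hj.1 (by omega)
  refine ⟨?_, ?_, ?_⟩
  · intro i hi
    rw [hF]
    have := hPpos i hi
    linarith
  · intro i h1 h2
    rw [hF, hF, hsplit i h1]
    have hPn : 0 ≤ P (i - 1) := hPnn _ (by omega)
    have hθle : θ i ≤ 1 := (hθ01 i h1 h2).2
    rw [← hθu i h1 h2]
    constructor
    · intro h
      have hlt : P (i - 1) * θ i < P (i - 1) := by linarith
      have hPpos' : 0 < P (i - 1) := by
        rcases lt_or_eq_of_le hPn with h' | h'
        · exact h'
        · exfalso; rw [← h'] at hlt; simp at hlt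
      refine ⟨?_, by linarith⟩
      nlinarith
    · rintro ⟨hθlt, hF1⟩
      have hPpos' : 0 < P (i - 1) := by linarith
      nlinarith
  · intro i h1 h2 hnotu hlt
    have hθ1 : θ i = 1 := by
      rcases lt_or_eq_of_le (hθ01 i h1 h2).2 with h | h
      · exact absurd ((hθu i h1 h2).mp h) hnotu
      · exact h
    rw [hF, hF, hsplit i h1, hθ1, mul_one]
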